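/- arXiv:2510.05427 — 2 statements merged into one kernel-verified Lean document; each statement's English description precedes it below -/
import Mathlib

section
/- For every Schwartz function φ : ℝ² → ℂ, lim_{ε→0⁺} ε ∫_{ℝ²} x φ(x,y) / ((x² + ε²)(y² + ε²)) dx dy = π · PVℓ(φ), where PVℓ(φ) = lim_{δ→0⁺} ∫_{|x|≥δ} φ(x,0)/x dx. -/
open MeasureTheory Filter Topology Set

noncomputable section

namespace PVLaux

/-- the rescaled kernel -/
def K (ε x u : ℝ) : ℝ := x / (x ^ 2 + ε ^ 2) * (1 + u ^ 2)⁻¹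

variable (φ : SchwartzMap (ℝ × ℝ) ℂ)

/-- symmetrized integrand -/
def G (ε : ℝ) (p : ℝ × ℝ) : ℂ :=
  K ε p.1 p.2 • (φ (p.1, ε * p.2) - φ (-p.1, ε * p.2))

/-- the product measure on `(0,∞) × ℝ` -/
def ν : Measure (ℝ × ℝ) := (volume.restrict (Ioi (0:ℝ))).prod volume

/-- dominating function -/
def D (C : ℝ) (x : ℝ) : ℝ :=
  indicator (Ioc (0:ℝ) 1) (fun _ => 2 * C) x + indicator (Ioi (1:ℝ)) (fun x => 2 * C * (x ^ 4)⁻¹) x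

lemma Kneg (ε x u : ℝ) : K ε (-x) u = -K ε x u := by
  simp [K, neg_div, neg_mul]

lemma K_abs {ε x : ℝ} (u : ℝ) (h : 0 < x ^ 2 + ε ^ 2) :
    |K ε x u| = |x| / (x ^ 2 + ε ^ 2) * (1 + u ^ 2)⁻¹ := by
  rw [K, abs_mul, abs_div, abs_of_pos h, abs_of_pos (by positivity : (0:ℝ) < (1 + u ^ 2)⁻¹)]

lemma exists_bounds : ∃ C : ℝ, 0 < C ∧ (∀ p, ‖φ p‖ ≤ C) ∧
    (∀ p, ‖fderiv ℝ (φ : ℝ × ℝ → ℂ) p‖ ≤ C) ∧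
    (∀ p : ℝ × ℝ, ‖p‖ ^ 2 * ‖φ p‖ ≤ C) ∧ (∀ p : ℝ × ℝ, ‖p‖ ^ 4 * ‖φ p‖ ≤ C) := by
  obtain ⟨C0, hC0pos, h0⟩ := φ.decay 0 0
  obtain ⟨C1, hC1pos, h1⟩ := φ.decay 0 1
  obtain ⟨C2, hC2pos, h2⟩ := φ.decay 2 0
  obtain ⟨C4, hC4pos, h4⟩ := φ.decay 4 0
  refine ⟨max (max C0 C1) (max C2 C4), by positivity, fun p => ?_, fun p => ?_, fun p => ?_,
    fun p => ?_⟩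
  · have := h0 p
    simp only [pow_zero, one_mul, norm_iteratedFDeriv_zero] at this
    exact this.trans (le_max_of_le_left (le_max_left _ _))
  · have := h1 p
    simp only [pow_zero, one_mul] at this
    rw [← norm_iteratedFDeriv_fderiv, norm_iteratedFDeriv_zero] at this
    exact this.trans (le_max_of_le_left (le_max_right _ _))
  · have := h2 p
    rw [norm_iteratedFDeriv_zero] at this
    exact this.trans (le_max_of_le_right (le_max_left _ _))
  · have := h4 p
    rw [norm_iteratedFDeriv_zero] at this
    exact this.trans (le_max_of_le_right (le_max_right _ _))

lemma D_nonneg {C : ℝ} (hC : 0 ≤ C) (x : ℝ) : 0 ≤ D C x := by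
  apply add_nonneg <;> apply indicator_nonneg <;> intro y hy
  · positivity
  · have : (0:ℝ) < y := lt_trans one_pos hy
    positivity

lemma D_integrable (C : ℝ) : Integrable (D C) := by
  apply Integrable.add
  · exact (IntegrableOn.integrable_indicator
      (integrableOn_const (by simp)) measurableSet_Ioc)
  · refine IntegrableOn.integrable_indicator ?_ measurableSet_Ioi
    have h := (integrableOn_Ioi_rpow_of_lt (a := (-4:ℝ)) (by norm_num) (c := 1) one_pos)
    refine IntegrableOn.congr_fun (h.const_mul (2*C)) (fun x hx => ?_) measurableSet_Ioi
    have hx0 : (0:ℝ) < x := lt_trans one_pos hx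
    rw [Real.rpow_neg hx0.le, show (4:ℝ) = ((4:ℕ):ℝ) from by norm_num, Real.rpow_natCast]

lemma diff_bound {C : ℝ} (hC1 : ∀ p, ‖fderiv ℝ (φ : ℝ × ℝ → ℂ) p‖ ≤ C) (x v : ℝ) :
    ‖φ (x, v) - φ (-x, v)‖ ≤ C * (2 * |x|) := by
  have h := Convex.norm_image_sub_le_of_norm_fderiv_le
    (f := (φ : ℝ × ℝ → ℂ)) (s := univ) (fun p _ => φ.differentiableAt)
    (fun p _ => hC1 p) convex_univ (mem_univ ((-x, v) : ℝ × ℝ)) (mem_univ ((x, v) : ℝ × ℝ))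
  have h2 : ((x, v) : ℝ × ℝ) - (-x, v) = (2 * x, 0) := by
    simp [Prod.ext_iff]
    ring
  have hnorm : ‖((x, v) : ℝ × ℝ) - (-x, v)‖ = 2 * |x| := by
    rw [h2, Prod.norm_def]
    simp [Real.norm_eq_abs, abs_mul, abs_two, max_eq_left, abs_nonneg]
  rw [hnorm] at h
  exact h

lemma phi_tail {C : ℝ} (hC4 : ∀ p : ℝ × ℝ, ‖p‖ ^ 4 * ‖φ p‖ ≤ C) {x : ℝ} (hx : 0 < x)
    (a v : ℝ) (ha : |a| = x) : ‖φ (a, v)‖ ≤ C / x ^ 4 := by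
  rw [le_div_iff₀ (by positivity)]
  have h1 : x ^ 4 ≤ ‖((a, v) : ℝ × ℝ)‖ ^ 4 := by
    apply pow_le_pow_left₀ hx.le
    rw [← ha]
    exact norm_fst_le ((a, v) : ℝ × ℝ)
  calc ‖φ (a, v)‖ * x ^ 4 = x ^ 4 * ‖φ (a, v)‖ := by ring
    _ ≤ ‖((a, v) : ℝ × ℝ)‖ ^ 4 * ‖φ (a, v)‖ :=
        mul_le_mul_of_nonneg_right h1 (norm_nonneg _)
    _ ≤ C := hC4 _

lemma norm_G_le {C : ℝ} (hC1 : ∀ p, ‖fderiv ℝ (φ : ℝ × ℝ → ℂ) p‖ ≤ C)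
    (hC4 : ∀ p : ℝ × ℝ, ‖p‖ ^ 4 * ‖φ p‖ ≤ C) {ε x : ℝ} (hε : 0 ≤ ε) (hx : 0 < x) (u : ℝ) :
    ‖G φ ε (x, u)‖ ≤ D C x * (1 + u ^ 2)⁻¹ := by
  have hC : 0 ≤ C := le_trans (norm_nonneg _) (hC1 0)
  have hden : (0:ℝ) < x ^ 2 + ε ^ 2 := by positivity
  have hu : (0:ℝ) < 1 + u ^ 2 := by positivity
  have hGn : ‖G φ ε (x, u)‖ =
      x / (x ^ 2 + ε ^ 2) * (1 + u ^ 2)⁻¹ * ‖φ (x, ε * u) - φ (-x, ε * u)‖ := by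
    rw [G, norm_smul, Real.norm_eq_abs, K_abs _ hden, abs_of_pos hx]
  rcases le_or_gt x 1 with hx1 | hx1
  · have hD : D C x = 2 * C := by
      rw [D, indicator_of_mem (show x ∈ Ioc (0:ℝ) 1 from ⟨hx, hx1⟩),
        indicator_of_notMem (fun h : x ∈ Ioi (1:ℝ) => (not_lt.2 hx1) h), add_zero]
    rw [hGn, hD]
    have hd := diff_bound φ hC1 x (ε * u)
    rw [abs_of_pos hx] at hd
    calc x / (x ^ 2 + ε ^ 2) * (1 + u ^ 2)⁻¹ * ‖φ (x, ε * u) - φ (-x, ε * u)‖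
        ≤ x / (x ^ 2 + ε ^ 2) * (1 + u ^ 2)⁻¹ * (C * (2 * x)) := by
          apply mul_le_mul_of_nonneg_left hd (by positivity)
      _ = x / (x ^ 2 + ε ^ 2) * (C * (2 * x)) * (1 + u ^ 2)⁻¹ := by ring
      _ ≤ 2 * C * (1 + u ^ 2)⁻¹ := by
          apply mul_le_mul_of_nonneg_right _ (by positivity)
          rw [div_mul_eq_mul_div, div_le_iff₀ hden]
          nlinarith [sq_nonneg ε, sq_nonneg x]
  · have hD : D C x = 2 * C * (x ^ 4)⁻¹ := by
      rw [D, indicator_of_notMem (fun h : x ∈ Ioc (0:ℝ) 1 => (not_le.2 hx1) h.2),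
        indicator_of_mem (show x ∈ Ioi (1:ℝ) from hx1), zero_add]
    rw [hGn, hD]
    have hb1 := phi_tail φ hC4 hx x (ε * u) (abs_of_pos hx)
    have hb2 := phi_tail φ hC4 hx (-x) (ε * u) (by rw [abs_neg, abs_of_pos hx])
    have hd : ‖φ (x, ε * u) - φ (-x, ε * u)‖ ≤ 2 * C / x ^ 4 := by
      calc ‖φ (x, ε * u) - φ (-x, ε * u)‖ ≤ ‖φ (x, ε * u)‖ + ‖φ (-x, ε * u)‖ :=
          norm_sub_le _ _
        _ ≤ C / x ^ 4 + C / x ^ 4 := add_le_add hb1 hb2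
        _ = 2 * C / x ^ 4 := by ring
    have hK : x / (x ^ 2 + ε ^ 2) ≤ 1 := by
      rw [div_le_one hden]
      nlinarith [sq_nonneg ε]
    calc x / (x ^ 2 + ε ^ 2) * (1 + u ^ 2)⁻¹ * ‖φ (x, ε * u) - φ (-x, ε * u)‖
        ≤ 1 * (1 + u ^ 2)⁻¹ * (2 * C / x ^ 4) := by
          apply mul_le_mul (mul_le_mul_of_nonneg_right hK (by positivity)) hd
            (norm_nonneg _) (by positivity)
      _ = 2 * C * (x ^ 4)⁻¹ * (1 + u ^ 2)⁻¹ := by ring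

lemma G_meas (ε : ℝ) : AEStronglyMeasurable (G φ ε) (ν) := by
  have hφ : Continuous (φ : ℝ × ℝ → ℂ) := φ.continuous
  apply Measurable.aestronglyMeasurable
  apply Measurable.smul (f := fun p : ℝ × ℝ => K ε p.1 p.2)
    (g := fun p : ℝ × ℝ => φ (p.1, ε * p.2) - φ (-p.1, ε * p.2))
  · unfold K
    exact ((measurable_fst.div ((measurable_fst.pow_const 2).add_const _)).mul
      ((measurable_const.add (measurable_snd.pow_const 2)).inv))
  · exact ((hφ.comp (continuous_fst.prodMk (continuous_const.mul continuous_snd))).sub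
      (hφ.comp (continuous_fst.neg.prodMk (continuous_const.mul continuous_snd)))).measurable

lemma nu_ae_pos : ∀ᵐ p ∂(ν), p.1 ∈ Ioi (0:ℝ) := by
  have h : ν = (volume.prod volume).restrict ((Ioi (0:ℝ)) ×ˢ (univ : Set ℝ)) := by
    rw [ν, ← Measure.prod_restrict, Measure.restrict_univ]
  rw [h]
  filter_upwards [ae_restrict_mem (measurableSet_Ioi.prod MeasurableSet.univ)] with p hp
  exact hp.1

lemma G_int {C : ℝ} (hC1 : ∀ p, ‖fderiv ℝ (φ : ℝ × ℝ → ℂ) p‖ ≤ C)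
    (hC4 : ∀ p : ℝ × ℝ, ‖p‖ ^ 4 * ‖φ p‖ ≤ C) {ε : ℝ} (hε : 0 ≤ ε) :
    Integrable (G φ ε) (ν) := by
  refine Integrable.mono'
    (g := fun p : ℝ × ℝ => D C p.1 * (1 + p.2 ^ 2)⁻¹)
    ((D_integrable C).restrict.mul_prod integrable_inv_one_add_sq) (G_meas φ ε) ?_
  · filter_upwards [nu_ae_pos] with p hp
    obtain ⟨x, u⟩ := p
    exact norm_G_le φ hC1 hC4 hε hp u

lemma G_cont_at (p : ℝ × ℝ) (hp : p.1 ∈ Ioi (0:ℝ)) :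
    Tendsto (fun ε => G φ ε p) (𝓝[>] (0:ℝ)) (𝓝 (G φ 0 p)) := by
  have hne : p.1 ^ 2 + (0:ℝ) ^ 2 ≠ 0 := by
    have : (0:ℝ) < p.1 := hp
    positivity
  have hcont : ContinuousAt (fun ε : ℝ => G φ ε p) 0 := by
    unfold G K
    apply ContinuousAt.fun_smul
    · exact ContinuousAt.mul
        (ContinuousAt.div continuousAt_const (by fun_prop) hne) continuousAt_const
    · exact ContinuousAt.sub
        ((φ.continuous.comp (continuous_const.prodMk (continuous_id.mul continuous_const))).continuousAt)
        ((φ.continuous.comp (continuous_const.prodMk (continuous_id.mul continuous_const))).continuousAt)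
  exact hcont.tendsto.mono_left nhdsWithin_le_nhds

lemma G_main_tendsto {C : ℝ} (hC1 : ∀ p, ‖fderiv ℝ (φ : ℝ × ℝ → ℂ) p‖ ≤ C)
    (hC4 : ∀ p : ℝ × ℝ, ‖p‖ ^ 4 * ‖φ p‖ ≤ C) :
    Tendsto (fun ε : ℝ => ∫ p, G φ ε p ∂ν) (𝓝[>] (0:ℝ))
      (𝓝 (∫ p, G φ 0 p ∂ν)) := by
  apply tendsto_integral_filter_of_dominated_convergence
    (bound := fun p : ℝ × ℝ => D C p.1 * (1 + p.2 ^ 2)⁻¹)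
  · exact Eventually.of_forall fun ε => G_meas φ ε
  · filter_upwards [self_mem_nhdsWithin] with ε hε
    filter_upwards [nu_ae_pos] with p hp
    obtain ⟨x, u⟩ := p
    exact norm_G_le φ hC1 hC4 (le_of_lt hε) hp u
  · exact (D_integrable C).restrict.mul_prod integrable_inv_one_add_sq
  · filter_upwards [nu_ae_pos] with p hp
    exact G_cont_at φ p hp

lemma div_sq (x : ℝ) : x / x ^ 2 = x⁻¹ := by
  rcases eq_or_ne x 0 with h | h
  · simp [h]
  · field_simp

lemma G_zero_eval (x u : ℝ) :
    G φ 0 (x, u) = (x⁻¹ * (1 + u ^ 2)⁻¹) • (φ (x, 0) - φ (-x, 0)) := by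
  have : K 0 x u = x⁻¹ * (1 + u ^ 2)⁻¹ := by
    rw [K]
    norm_num [div_sq]
  rw [G]
  simp only [this]
  norm_num

lemma integral_G_zero {C : ℝ} (hC1 : ∀ p, ‖fderiv ℝ (φ : ℝ × ℝ → ℂ) p‖ ≤ C)
    (hC4 : ∀ p : ℝ × ℝ, ‖p‖ ^ 4 * ‖φ p‖ ≤ C) :
    ∫ p, G φ 0 p ∂ν =
      (Real.pi : ℝ) • ∫ x in Ioi (0:ℝ), x⁻¹ • (φ (x, 0) - φ (-x, 0)) := by
  have hint : Integrable (G φ 0) ((volume.restrict (Ioi (0:ℝ))).prod volume) :=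
    G_int φ hC1 hC4 le_rfl
  rw [show (ν : Measure (ℝ × ℝ)) = (volume.restrict (Ioi (0:ℝ))).prod volume from rfl,
    integral_prod _ hint]
  rw [← integral_smul]
  refine integral_congr_ae (Eventually.of_forall fun x => ?_)
  simp only [G_zero_eval]
  have h1 : ∀ u : ℝ, (x⁻¹ * (1 + u ^ 2)⁻¹) • (φ (x, 0) - φ (-x, 0))
      = ((1 + u ^ 2)⁻¹ : ℝ) • (x⁻¹ • (φ (x, 0) - φ (-x, 0))) := by
    intro u
    rw [smul_smul, mul_comm]
  simp only [h1]
  rw [integral_smul_const, integral_univ_inv_one_add_sq]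

/-- the PV integrand, symmetrized -/
def g (x : ℝ) : ℂ := x⁻¹ • (φ (x, 0) - φ (-x, 0))

lemma g_eq_G0 (x : ℝ) : g φ x = G φ 0 (x, 0) := by
  rw [g, G_zero_eval]
  norm_num

lemma g_meas : AEStronglyMeasurable (g φ) (volume : Measure ℝ) := by
  have hφ : Continuous (φ : ℝ × ℝ → ℂ) := φ.continuous
  apply Measurable.aestronglyMeasurable
  exact measurable_inv.smul
    (((hφ.comp (continuous_id.prodMk continuous_const)).sub
      (hφ.comp (continuous_id.neg.prodMk continuous_const))).measurable)

lemma norm_g_le {C : ℝ} (hC1 : ∀ p, ‖fderiv ℝ (φ : ℝ × ℝ → ℂ) p‖ ≤ C)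
    (hC4 : ∀ p : ℝ × ℝ, ‖p‖ ^ 4 * ‖φ p‖ ≤ C) {x : ℝ} (hx : 0 < x) : ‖g φ x‖ ≤ D C x := by
  have h := norm_G_le φ hC1 hC4 le_rfl hx 0
  rw [← g_eq_G0] at h
  simpa using h

lemma g_int {C : ℝ} (hC1 : ∀ p, ‖fderiv ℝ (φ : ℝ × ℝ → ℂ) p‖ ≤ C)
    (hC4 : ∀ p : ℝ × ℝ, ‖p‖ ^ 4 * ‖φ p‖ ≤ C) : IntegrableOn (g φ) (Ioi (0:ℝ)) := by
  refine Integrable.mono' (D_integrable C).restrict (g_meas φ).restrict ?_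
  filter_upwards [ae_restrict_mem measurableSet_Ioi] with x hx
  exact norm_g_le φ hC1 hC4 hx

lemma tendsto_tail_integral {C : ℝ} (hC1 : ∀ p, ‖fderiv ℝ (φ : ℝ × ℝ → ℂ) p‖ ≤ C)
    (hC4 : ∀ p : ℝ × ℝ, ‖p‖ ^ 4 * ‖φ p‖ ≤ C) :
    Tendsto (fun δ : ℝ => ∫ x in Ioi δ, g φ x) (𝓝[>] (0:ℝ))
      (𝓝 (∫ x in Ioi (0:ℝ), g φ x)) := by
  have hC : 0 ≤ C := le_trans (norm_nonneg _) (hC1 0)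
  simp_rw [← integral_indicator measurableSet_Ioi]
  apply tendsto_integral_filter_of_dominated_convergence (bound := D C)
  · exact Eventually.of_forall fun δ => (g_meas φ).indicator measurableSet_Ioi
  · filter_upwards [self_mem_nhdsWithin] with δ hδ
    refine Eventually.of_forall fun x => ?_
    by_cases hx : x ∈ Ioi δ
    · rw [indicator_of_mem hx]
      exact norm_g_le φ hC1 hC4 (lt_trans hδ hx)
    · rw [indicator_of_notMem hx, norm_zero]
      exact D_nonneg hC x
  · exact D_integrable C
  · refine Eventually.of_forall fun x => ?_
    by_cases hx : 0 < x
    · refine Tendsto.congr' ?_ tendsto_const_nhds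
      filter_upwards [Ioo_mem_nhdsGT_of_mem (by exact ⟨le_rfl, hx⟩ : (0:ℝ) ∈ Ico 0 x)]
        with δ hδ
      rw [indicator_of_mem (by exact hδ.2 : x ∈ Ioi δ), indicator_of_mem (by exact hx)]
    · refine Tendsto.congr' ?_ tendsto_const_nhds
      filter_upwards [self_mem_nhdsWithin] with δ hδ
      have h0x : x ≤ 0 := not_lt.mp hx
      have hδ0 : (0:ℝ) < δ := hδ
      rw [indicator_of_notMem (by simp only [mem_Ioi, not_lt]; linarith),
        indicator_of_notMem (by simp only [mem_Ioi, not_lt]; linarith)]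

lemma phi0_int {C : ℝ} (hC0 : ∀ p, ‖φ p‖ ≤ C)
    (hC2 : ∀ p : ℝ × ℝ, ‖p‖ ^ 2 * ‖φ p‖ ≤ C) {s : ℝ} (hs : s ≠ 0) :
    Integrable (fun x : ℝ => (φ (s * x, 0) : ℂ)) := by
  have hφ : Continuous (φ : ℝ × ℝ → ℂ) := φ.continuous
  refine Integrable.mono' (g := fun x : ℝ => (C + C) * (1 + (s * x) ^ 2)⁻¹) ?_ ?_ ?_
  · have := ((integrable_comp_mul_left_iff
      (fun y : ℝ => (1 + y ^ 2)⁻¹) hs).2 integrable_inv_one_add_sq).const_mul (C + C)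
    simpa using this
  · exact (hφ.comp ((continuous_const.mul continuous_id).prodMk continuous_const)).aestronglyMeasurable
  · refine Eventually.of_forall fun x => ?_
    have h1 : (1 + (s * x) ^ 2) * ‖φ (s * x, 0)‖ ≤ C + C := by
      have ha : ‖φ (s * x, 0)‖ ≤ C := hC0 _
      have hb : (s * x) ^ 2 * ‖φ (s * x, 0)‖ ≤ C := by
        have h2 : (s * x) ^ 2 ≤ ‖((s * x, 0) : ℝ × ℝ)‖ ^ 2 := by
          rw [← sq_abs (s * x)]
          apply pow_le_pow_left₀ (abs_nonneg _)
          exact norm_fst_le ((s * x, 0) : ℝ × ℝ)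
        calc (s * x) ^ 2 * ‖φ (s * x, 0)‖ ≤ ‖((s * x, 0) : ℝ × ℝ)‖ ^ 2 * ‖φ (s * x, 0)‖ :=
            mul_le_mul_of_nonneg_right h2 (norm_nonneg _)
          _ ≤ C := hC2 _
      calc (1 + (s * x) ^ 2) * ‖φ (s * x, 0)‖
          = ‖φ (s * x, 0)‖ + (s * x) ^ 2 * ‖φ (s * x, 0)‖ := by ring
        _ ≤ C + C := add_le_add ha hb
    have hpos : (0:ℝ) < 1 + (s * x) ^ 2 := by positivity
    rw [mul_comm] at h1
    rw [← le_div_iff₀ hpos] at h1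
    simpa [div_eq_mul_inv] using h1

lemma tail_eq {C : ℝ} (hC0 : ∀ p, ‖φ p‖ ≤ C)
    (hC2 : ∀ p : ℝ × ℝ, ‖p‖ ^ 2 * ‖φ p‖ ≤ C) {δ : ℝ} (hδ : 0 < δ) :
    ∫ x in {x : ℝ | δ ≤ |x|}, φ (x, 0) / (x : ℂ) = ∫ x in Ioi δ, g φ x := by
  have hφ : Continuous (φ : ℝ × ℝ → ℂ) := φ.continuous
  set h : ℝ → ℂ := fun x => φ (x, 0) / (x : ℂ) with hh
  have hmeas : AEStronglyMeasurable h (volume : Measure ℝ) :=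
    ((hφ.comp (continuous_id.prodMk continuous_const)).measurable.div
      Complex.measurable_ofReal).aestronglyMeasurable
  have hmeasneg : AEStronglyMeasurable (fun x => h (-x)) (volume : Measure ℝ) :=
    ((hφ.comp (continuous_id.neg.prodMk continuous_const)).measurable.div
      (Complex.measurable_ofReal.comp measurable_neg)).aestronglyMeasurable
  have hφr : Integrable (fun x : ℝ => (φ (x, 0) : ℂ)) := by
    have := phi0_int φ hC0 hC2 (s := 1) one_ne_zero
    simpa using this
  have hφl : Integrable (fun x : ℝ => (φ (-x, 0) : ℂ)) := by
    have := phi0_int φ hC0 hC2 (s := -1) (by norm_num)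
    simpa [neg_one_mul] using this
  have hnorm : ∀ x : ℝ, δ ≤ |x| → ‖h x‖ ≤ δ⁻¹ * ‖(φ (x, 0) : ℂ)‖ := by
    intro x hx
    rw [hh]
    simp only [norm_div, Complex.norm_real, Real.norm_eq_abs]
    rw [div_eq_inv_mul]
    apply mul_le_mul_of_nonneg_right _ (norm_nonneg _)
    exact inv_anti₀ hδ hx
  have hIci : IntegrableOn h (Ici δ) := by
    refine Integrable.mono' ((hφr.norm.const_mul δ⁻¹).restrict) hmeas.restrict ?_
    filter_upwards [ae_restrict_mem measurableSet_Ici] with x hx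
    exact hnorm x (le_trans hx (le_abs_self x))
  have hIic : IntegrableOn h (Iic (-δ)) := by
    refine Integrable.mono' ((hφr.norm.const_mul δ⁻¹).restrict) hmeas.restrict ?_
    filter_upwards [ae_restrict_mem measurableSet_Iic] with x hx
    exact hnorm x (le_trans (le_neg.mp hx) (neg_le_abs x))
  have hIoi : IntegrableOn h (Ioi δ) := hIci.mono_set Ioi_subset_Ici_self
  have hIoiNeg : IntegrableOn (fun x => h (-x)) (Ioi δ) := by
    refine Integrable.mono' ((hφl.norm.const_mul δ⁻¹).restrict) hmeasneg.restrict ?_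
    filter_upwards [ae_restrict_mem measurableSet_Ioi] with x hx
    have h1 : δ ≤ |(-x)| := by
      rw [abs_neg, abs_of_pos (lt_trans hδ hx)]
      exact hx.le
    have := hnorm (-x) h1
    simpa using this
  have hset : {x : ℝ | δ ≤ |x|} = Iic (-δ) ∪ Ici δ := by
    ext x
    rw [mem_setOf_eq, le_abs]
    simp only [mem_union, mem_Iic, mem_Ici, le_neg]
    tauto
  have hdisj : Disjoint (Iic (-δ)) (Ici δ) := by
    rw [Set.disjoint_left]
    intro x h1 h2
    simp only [mem_Iic] at h1
    simp only [mem_Ici] at h2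
    linarith
  rw [hset, setIntegral_union hdisj measurableSet_Ici hIic hIci,
    ← integral_comp_neg_Ioi, integral_Ici_eq_integral_Ioi, ← integral_add hIoiNeg hIoi]
  refine setIntegral_congr_fun measurableSet_Ioi fun x hx => ?_
  have hx0 : (x : ℂ) ≠ 0 := by
    simp only [ne_eq, Complex.ofReal_eq_zero]
    exact ne_of_gt (lt_trans hδ hx)
  rw [hh, g, Complex.real_smul, Complex.ofReal_inv]
  push_cast
  rw [div_neg, neg_add_eq_sub, div_sub_div_same, eq_comm, inv_mul_eq_div]

/-- unscaled kernel -/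
def w (ε x y : ℝ) : ℝ := x / ((x ^ 2 + ε ^ 2) * (y ^ 2 + ε ^ 2))

/-- inner integral after substitution -/
def Q (ε : ℝ) (x : ℝ) : ℂ := ∫ u : ℝ, K ε x u • (φ (x, ε * u) : ℂ)

lemma K_le {ε : ℝ} (hε : 0 < ε) (x u : ℝ) : |K ε x u| ≤ (2 * ε)⁻¹ * (1 + u ^ 2)⁻¹ := by
  rw [K_abs _ (by positivity)]
  apply mul_le_mul_of_nonneg_right _ (by positivity)
  have h2 : 2 * ε * |x| ≤ x ^ 2 + ε ^ 2 := by nlinarith [sq_nonneg (|x| - ε), sq_abs x]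
  rw [div_le_iff₀ (by positivity), inv_mul_eq_div, le_div_iff₀ (by positivity : (0:ℝ) < 2 * ε)]
  nlinarith [h2]
  
lemma phi_x_bound {C : ℝ} (hC0 : ∀ p, ‖φ p‖ ≤ C)
    (hC2 : ∀ p : ℝ × ℝ, ‖p‖ ^ 2 * ‖φ p‖ ≤ C) (x v : ℝ) :
    ‖(φ (x, v) : ℂ)‖ ≤ (C + C) * (1 + x ^ 2)⁻¹ := by
  have h1 : (1 + x ^ 2) * ‖φ (x, v)‖ ≤ C + C := by
    have ha : ‖φ (x, v)‖ ≤ C := hC0 _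
    have hb : x ^ 2 * ‖φ (x, v)‖ ≤ C := by
      have h2 : x ^ 2 ≤ ‖((x, v) : ℝ × ℝ)‖ ^ 2 := by
        rw [← sq_abs x]
        exact pow_le_pow_left₀ (abs_nonneg _) (norm_fst_le ((x, v) : ℝ × ℝ)) 2
      calc x ^ 2 * ‖φ (x, v)‖ ≤ ‖((x, v) : ℝ × ℝ)‖ ^ 2 * ‖φ (x, v)‖ :=
          mul_le_mul_of_nonneg_right h2 (norm_nonneg _)
        _ ≤ C := hC2 _
    calc (1 + x ^ 2) * ‖φ (x, v)‖ = ‖φ (x, v)‖ + x ^ 2 * ‖φ (x, v)‖ := by ring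
      _ ≤ C + C := add_le_add ha hb
  have hpos : (0:ℝ) < 1 + x ^ 2 := by positivity
  rw [mul_comm] at h1
  rw [← le_div_iff₀ hpos] at h1
  simpa [div_eq_mul_inv] using h1

lemma H_meas {ε : ℝ} : AEStronglyMeasurable
    (fun p : ℝ × ℝ => K ε p.1 p.2 • (φ (p.1, ε * p.2) : ℂ)) (volume.prod volume) := by
  have hφ : Continuous (φ : ℝ × ℝ → ℂ) := φ.continuous
  apply Measurable.aestronglyMeasurable
  apply Measurable.smul (f := fun p : ℝ × ℝ => K ε p.1 p.2)
    (g := fun p : ℝ × ℝ => φ (p.1, ε * p.2))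
  · unfold K
    exact ((measurable_fst.div ((measurable_fst.pow_const 2).add_const _)).mul
      ((measurable_const.add (measurable_snd.pow_const 2)).inv))
  · exact (hφ.comp (continuous_fst.prodMk (continuous_const.mul continuous_snd))).measurable

lemma H_int {C : ℝ} (hC0 : ∀ p, ‖φ p‖ ≤ C)
    (hC2 : ∀ p : ℝ × ℝ, ‖p‖ ^ 2 * ‖φ p‖ ≤ C) {ε : ℝ} (hε : 0 < ε) :
    Integrable (fun p : ℝ × ℝ => K ε p.1 p.2 • (φ (p.1, ε * p.2) : ℂ))
      (volume.prod volume) := by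
  refine Integrable.mono'
    (g := fun p : ℝ × ℝ => ((C + C) * (1 + p.1 ^ 2)⁻¹) * ((2 * ε)⁻¹ * (1 + p.2 ^ 2)⁻¹))
    ((integrable_inv_one_add_sq.const_mul (C + C)).mul_prod
      (integrable_inv_one_add_sq.const_mul (2 * ε)⁻¹)) (H_meas φ) ?_
  refine Eventually.of_forall fun p => ?_
  rw [norm_smul, Real.norm_eq_abs]
  calc |K ε p.1 p.2| * ‖(φ (p.1, ε * p.2) : ℂ)‖
      ≤ ((2 * ε)⁻¹ * (1 + p.2 ^ 2)⁻¹) * ((C + C) * (1 + p.1 ^ 2)⁻¹) :=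
        mul_le_mul (K_le hε _ _) (phi_x_bound φ hC0 hC2 _ _) (norm_nonneg _) (by positivity)
    _ = ((C + C) * (1 + p.1 ^ 2)⁻¹) * ((2 * ε)⁻¹ * (1 + p.2 ^ 2)⁻¹) := by ring

lemma u_int {C : ℝ} (hC0 : ∀ p, ‖φ p‖ ≤ C) (hC : 0 ≤ C) {ε : ℝ} (hε : 0 < ε) (a b : ℝ) :
    Integrable (fun u : ℝ => K ε a u • (φ (b, ε * u) : ℂ)) := by
  have hφ : Continuous (φ : ℝ × ℝ → ℂ) := φ.continuous
  refine Integrable.mono' (g := fun u : ℝ => ((2 * ε)⁻¹ * C) * (1 + u ^ 2)⁻¹)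
    ((integrable_inv_one_add_sq.const_mul _)) ?_ ?_
  · apply Measurable.aestronglyMeasurable
    apply Measurable.smul (f := fun u : ℝ => K ε a u) (g := fun u : ℝ => φ (b, ε * u))
    · unfold K
      exact measurable_const.mul ((measurable_const.add (measurable_id.pow_const 2)).inv)
    · exact (hφ.comp (continuous_const.prodMk (continuous_const.mul continuous_id))).measurable
  · refine Eventually.of_forall fun u => ?_
    rw [norm_smul, Real.norm_eq_abs]
    calc |K ε a u| * ‖(φ (b, ε * u) : ℂ)‖
        ≤ ((2 * ε)⁻¹ * (1 + u ^ 2)⁻¹) * C :=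
          mul_le_mul (K_le hε _ _) (hC0 _) (norm_nonneg _) (by positivity)
      _ = ((2 * ε)⁻¹ * C) * (1 + u ^ 2)⁻¹ := by ring

lemma Q_eq {ε : ℝ} (hε : 0 < ε) (x : ℝ) :
    Q φ ε x = ε • ∫ y : ℝ, w ε x y • (φ (x, y) : ℂ) := by
  have hε' : ε ≠ 0 := hε.ne'
  have h1 : ∀ u : ℝ, K ε x u • (φ (x, ε * u) : ℂ)
      = (ε ^ 2) • ((w ε x (ε * u)) • (φ (x, ε * u) : ℂ)) := by
    intro u
    rw [smul_smul]
    congr 1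
    rw [K, w]
    have hne1 : x ^ 2 + ε ^ 2 ≠ 0 := by positivity
    have hne2 : (ε * u) ^ 2 + ε ^ 2 ≠ 0 := by positivity
    have hne3 : (1:ℝ) + u ^ 2 ≠ 0 := by positivity
    field_simp
    ring
  rw [Q]
  simp_rw [h1]
  rw [integral_smul, MeasureTheory.Measure.integral_comp_mul_left
    (fun y => w ε x y • (φ (x, y) : ℂ)) ε, smul_smul]
  congr 1
  rw [abs_of_pos (inv_pos.2 hε), sq]
  field_simp

lemma main_eq {C : ℝ} (hC0 : ∀ p, ‖φ p‖ ≤ C)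
    (hC1 : ∀ p, ‖fderiv ℝ (φ : ℝ × ℝ → ℂ) p‖ ≤ C)
    (hC2 : ∀ p : ℝ × ℝ, ‖p‖ ^ 2 * ‖φ p‖ ≤ C)
    (hC4 : ∀ p : ℝ × ℝ, ‖p‖ ^ 4 * ‖φ p‖ ≤ C) {ε : ℝ} (hε : 0 < ε) :
    (ε : ℂ) * ∫ x : ℝ, ∫ y : ℝ,
        (x : ℂ) * φ (x, y) / (((x ^ 2 + ε ^ 2 : ℝ) : ℂ) * ((y ^ 2 + ε ^ 2 : ℝ) : ℂ))
      = ∫ p, G φ ε p ∂ν := by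
  have hC : 0 ≤ C := le_trans (norm_nonneg _) (hC0 0)
  have f0 : ∀ x y : ℝ, (x : ℂ) * φ (x, y) /
      (((x ^ 2 + ε ^ 2 : ℝ) : ℂ) * ((y ^ 2 + ε ^ 2 : ℝ) : ℂ)) = w ε x y • (φ (x, y) : ℂ) := by
    intro x y
    rw [w, Complex.real_smul]
    push_cast
    rw [div_mul_eq_mul_div]
  simp_rw [f0]
  rw [← Complex.real_smul, ← integral_smul]
  simp_rw [← Q_eq φ hε]
  have hQint : Integrable (Q φ ε) := by
    have := (H_int φ hC0 hC2 hε).integral_prod_left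
    exact this
  have hQneg : Integrable (fun x : ℝ => Q φ ε (-x)) := by
    have := (integrable_comp_mul_left_iff (Q φ ε) (R := -1) (by norm_num)).2 hQint
    simpa [neg_one_mul] using this
  rw [← intervalIntegral.integral_Iic_add_Ioi (b := (0:ℝ)) hQint.integrableOn hQint.integrableOn]
  have hIic : ∫ x in Iic (0:ℝ), Q φ ε x = ∫ x in Ioi (0:ℝ), Q φ ε (-x) := by
    rw [integral_comp_neg_Ioi]
    norm_num
  rw [hIic, ← integral_add hQneg.integrableOn hQint.integrableOn]
  have hx_eq : ∀ x : ℝ, Q φ ε (-x) + Q φ ε x = ∫ u : ℝ, G φ ε (x, u) := by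
    intro x
    rw [Q, Q]
    have hneg : ∀ u : ℝ, K ε (-x) u • (φ (-x, ε * u) : ℂ)
        = -(K ε x u • (φ (-x, ε * u) : ℂ)) := fun u => by rw [Kneg, neg_smul]
    simp_rw [hneg]
    rw [integral_neg, neg_add_eq_sub,
      ← integral_sub (u_int φ hC0 hC hε x x) (u_int φ hC0 hC hε x (-x))]
    refine integral_congr_ae (Eventually.of_forall fun u => ?_)
    show K ε x u • (φ (x, ε * u) : ℂ) - K ε x u • (φ (-x, ε * u) : ℂ)
      = K ε x u • ((φ (x, ε * u) : ℂ) - φ (-x, ε * u))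
    rw [smul_sub]
  have hfin : ∫ x in Ioi (0:ℝ), (Q φ ε (-x) + Q φ ε x) = ∫ p, G φ ε p ∂ν := by
    have hrw : ∫ x in Ioi (0:ℝ), (Q φ ε (-x) + Q φ ε x)
        = ∫ x in Ioi (0:ℝ), ∫ u : ℝ, G φ ε (x, u) :=
      integral_congr_ae (Eventually.of_forall fun x => hx_eq x)
    rw [hrw]
    have hunc : Integrable (Function.uncurry fun x u => G φ ε (x, u))
        ((volume.restrict (Ioi (0:ℝ))).prod volume) := by
      have : Integrable (G φ ε) ((volume.restrict (Ioi (0:ℝ))).prod volume) :=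
        G_int φ hC1 hC4 hε.le
      exact this
    rw [integral_integral hunc]
    rfl
  exact hfin

end PVLaux

end

/-- For every Schwartz function `φ : ℝ² → ℂ`,
`lim_{ε→0⁺} ε ∫_{ℝ²} x φ(x,y)/((x²+ε²)(y²+ε²)) dx dy = π · PVℓ(φ)`,
where `PVℓ(φ) = lim_{δ→0⁺} ∫_{|x|≥δ} φ(x,0)/x dx`. -/
theorem pvl_term_limit (φ : SchwartzMap (ℝ × ℝ) ℂ) (L : ℂ)
    (hL : Filter.Tendsto
      (fun δ : ℝ => ∫ x in {x : ℝ | δ ≤ |x|}, φ (x, 0) / (x : ℂ))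
      (𝓝[>] (0 : ℝ)) (𝓝 L)) :
    Filter.Tendsto
      (fun ε : ℝ =>
        (ε : ℂ) * ∫ x : ℝ, ∫ y : ℝ,
          (x : ℂ) * φ (x, y) / (((x ^ 2 + ε ^ 2 : ℝ) : ℂ) * ((y ^ 2 + ε ^ 2 : ℝ) : ℂ)))
      (𝓝[>] (0 : ℝ)) (𝓝 ((Real.pi : ℂ) * L)) := by
  obtain ⟨C, hCpos, hC0, hC1, hC2, hC4⟩ := PVLaux.exists_bounds φ
  have hmain := PVLaux.G_main_tendsto φ hC1 hC4
  have hLL' : L = ∫ x in Set.Ioi (0:ℝ), PVLaux.g φ x := by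
    refine tendsto_nhds_unique hL ?_
    refine Tendsto.congr' ?_ (PVLaux.tendsto_tail_integral φ hC1 hC4)
    filter_upwards [self_mem_nhdsWithin] with δ hδ
    exact (PVLaux.tail_eq φ hC0 hC2 hδ).symm
  have hval : ∫ p, PVLaux.G φ 0 p ∂PVLaux.ν = (Real.pi : ℂ) * L := by
    rw [PVLaux.integral_G_zero φ hC1 hC4]
    have h2 : ∫ x in Set.Ioi (0:ℝ), x⁻¹ • ((φ (x, 0) : ℂ) - φ (-x, 0))
        = ∫ x in Set.Ioi (0:ℝ), PVLaux.g φ x := rfl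
    rw [h2, ← hLL', Complex.real_smul]
  rw [← hval]
  refine Tendsto.congr' ?_ hmain
  filter_upwards [self_mem_nhdsWithin] with ε hε
  exact (PVLaux.main_eq φ hC0 hC1 hC2 hC4 hε).symm
end

section
/- Let (c_k)_{k∈ℕ} be nonnegative real numbers with b := Σ_{k} c_k < ∞, and let x be a real number with b x² < 1. Let J₀ denote the Bessel function of order zero, J₀(z) = (1/π) ∫₀^π cos(z sin θ) dθ. Then the family k ↦ J₀(2√(c_k) x) is multipliable, and its product P = ∏_k J₀(2√(c_k) x) satisfies |P/(1 − b x²) − 1| ≤ b² x⁴ / (2 (1 − b x²)²). -/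
/-- The Bessel function of order zero, `J₀(z) = (1/π) ∫₀^π cos(z sin θ) dθ`. -/
noncomputable def besselJ0 (z : ℝ) : ℝ :=
  (1 / Real.pi) * ∫ θ in (0 : ℝ)..Real.pi, Real.cos (z * Real.sin θ)


open intervalIntegral Real

lemma my_sin_lower {u : ℝ} (hu : 0 ≤ u) : u - u^3/6 ≤ Real.sin u := by
  have h1 : Real.sin u = ∫ t in (0:ℝ)..u, Real.cos t := by
    rw [integral_cos]; simp
  have h2 : (∫ t in (0:ℝ)..u, (1 - t^2/2)) = u - u^3/6 := by
    rw [intervalIntegral.integral_sub intervalIntegrable_const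
      (Continuous.intervalIntegrable (by continuity) _ _)]
    rw [intervalIntegral.integral_div, integral_pow]
    norm_num; ring
  rw [h1, ← h2]
  apply intervalIntegral.integral_mono_on hu
    (Continuous.intervalIntegrable (by continuity) _ _)
    (Continuous.intervalIntegrable (by continuity) _ _)
  intro t _
  exact Real.one_sub_sq_div_two_le_cos

lemma my_cos_upper (u : ℝ) : Real.cos u ≤ 1 - u^2/2 + u^4/24 := by
  wlog hu : 0 ≤ u with H
  · have := H (-u) (by linarith [le_of_not_ge hu])
    rw [show u^4 = (-u)^4 by ring]; simpa using this
  have h1 : Real.cos u = 1 - ∫ t in (0:ℝ)..u, Real.sin t := by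
    rw [integral_sin]; simp
  have h2 : (∫ t in (0:ℝ)..u, (t - t^3/6)) = u^2/2 - u^4/24 := by
    rw [intervalIntegral.integral_sub (Continuous.intervalIntegrable (by continuity) _ _)
      (Continuous.intervalIntegrable (by continuity) _ _)]
    rw [intervalIntegral.integral_div, integral_pow, integral_id]
    norm_num; ring
  have h3 : u^2/2 - u^4/24 ≤ ∫ t in (0:ℝ)..u, Real.sin t := by
    rw [← h2]
    apply intervalIntegral.integral_mono_on hu
      (Continuous.intervalIntegrable (by continuity) _ _)
      (Continuous.intervalIntegrable (by continuity) _ _)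
    intro t ht
    exact my_sin_lower ht.1
  rw [h1]; linarith
open intervalIntegral Real


lemma my_sin_sq : (∫ θ in (0:ℝ)..Real.pi, Real.sin θ ^ 2) = Real.pi / 2 := by
  simp

lemma my_sin_quart : (∫ θ in (0:ℝ)..Real.pi, Real.sin θ ^ 4) = 3 * Real.pi / 8 := by
  have := integral_sin_pow_even 2
  norm_num [Finset.prod_range_succ] at this
  rw [show (4:ℕ) = 2*2 by norm_num, this]; ring

lemma le_besselJ0 (z : ℝ) : 1 - z^2/4 ≤ besselJ0 z := by
  have hπ := Real.pi_pos
  have h2 : (∫ θ in (0:ℝ)..Real.pi, (1 - z^2/2 * Real.sin θ ^ 2))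
      = Real.pi * (1 - z^2/4) := by
    rw [intervalIntegral.integral_sub intervalIntegrable_const
      (Continuous.intervalIntegrable (by continuity) _ _),
      intervalIntegral.integral_const_mul, my_sin_sq]
    simp; ring
  have h3 : Real.pi * (1 - z^2/4) ≤ ∫ θ in (0:ℝ)..Real.pi, Real.cos (z * Real.sin θ) := by
    rw [← h2]
    apply intervalIntegral.integral_mono_on hπ.le
      (Continuous.intervalIntegrable (by continuity) _ _)
      (Continuous.intervalIntegrable (by continuity) _ _)
    intro t _
    have := Real.one_sub_sq_div_two_le_cos (x := z * Real.sin t)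
    calc 1 - z^2/2 * Real.sin t ^ 2 = 1 - (z * Real.sin t)^2/2 := by ring
    _ ≤ _ := this
  rw [besselJ0, one_div, inv_mul_eq_div, le_div_iff₀ hπ]
  linarith [h3]

lemma besselJ0_le (z : ℝ) : besselJ0 z ≤ 1 - z^2/4 + z^4/64 := by
  have hπ := Real.pi_pos
  have h2 : (∫ θ in (0:ℝ)..Real.pi, (1 - z^2/2 * Real.sin θ ^ 2 + z^4/24 * Real.sin θ ^ 4))
      = Real.pi * (1 - z^2/4 + z^4/64) := by
    rw [intervalIntegral.integral_add
      ((_root_.intervalIntegrable_const).sub (Continuous.intervalIntegrable (by continuity) _ _))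
      (Continuous.intervalIntegrable (by continuity) _ _),
      intervalIntegral.integral_sub intervalIntegrable_const
      (Continuous.intervalIntegrable (by continuity) _ _),
      intervalIntegral.integral_const_mul, intervalIntegral.integral_const_mul,
      my_sin_sq, my_sin_quart]
    simp; ring
  have h3 : (∫ θ in (0:ℝ)..Real.pi, Real.cos (z * Real.sin θ)) ≤ Real.pi * (1 - z^2/4 + z^4/64) := by
    rw [← h2]
    apply intervalIntegral.integral_mono_on hπ.le
      (Continuous.intervalIntegrable (by continuity) _ _)
      (Continuous.intervalIntegrable (by continuity) _ _)
    intro t _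
    have := my_cos_upper (z * Real.sin t)
    calc Real.cos (z * Real.sin t) ≤ 1 - (z * Real.sin t)^2/2 + (z * Real.sin t)^4/24 := this
    _ = 1 - z^2/2 * Real.sin t ^ 2 + z^4/24 * Real.sin t ^ 4 := by ring
  rw [besselJ0, one_div, inv_mul_eq_div, div_le_iff₀ hπ]
  linarith [h3]

lemma weier {ι : Type*} (t : ι → ℝ) (ht : ∀ k, 0 ≤ t k) (ht1 : ∀ k, t k ≤ 1) (F : Finset ι) :
    1 - ∑ k ∈ F, t k ≤ ∏ k ∈ F, (1 - t k) := by
  classical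
  refine Finset.induction_on F (by simp) ?_
  intro a F hne ih
  rw [Finset.prod_insert hne, Finset.sum_insert hne]
  have hp0 : (0:ℝ) ≤ ∏ k ∈ F, (1 - t k) :=
    Finset.prod_nonneg (fun k _ => by linarith [ht1 k])
  have hs0 : (0:ℝ) ≤ ∑ k ∈ F, t k := Finset.sum_nonneg (fun k _ => ht k)
  nlinarith [ht a, ht1 a, mul_le_mul_of_nonneg_left ih (by linarith [ht1 a] : (0:ℝ) ≤ 1 - t a)]

open Filter Topology

/-- Let `(c_k)` be nonnegative reals with `b := Σ c_k < ∞` and let `x` be a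
real number with `b x² < 1`.  Then the family `k ↦ J₀(2√(c_k) x)` is multipliable, and its
product `P` satisfies `|P/(1 − b x²) − 1| ≤ b² x⁴ / (2(1 − b x²)²)`. -/
theorem bessel_product_approximation {ι : Type*} [Countable ι]
    (c : ι → ℝ) (hc : ∀ k, 0 ≤ c k) (hsum : Summable c)
    (x : ℝ) (hx : (∑' k, c k) * x ^ 2 < 1) :
    Multipliable (fun k => besselJ0 (2 * Real.sqrt (c k) * x)) ∧
    |(∏' k, besselJ0 (2 * Real.sqrt (c k) * x)) / (1 - (∑' k, c k) * x ^ 2) - 1| ≤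
      (∑' k, c k) ^ 2 * x ^ 4 / (2 * (1 - (∑' k, c k) * x ^ 2) ^ 2) := by
  set b := ∑' k, c k with hb
  set s := b * x ^ 2 with hsdef
  have hb0 : 0 ≤ b := tsum_nonneg hc
  have hx2 : 0 ≤ x ^ 2 := sq_nonneg x
  have hs0 : 0 ≤ s := mul_nonneg hb0 hx2
  have hs1 : s < 1 := hx
  set t := fun k => c k * x ^ 2 with htdef
  have ht0 : ∀ k, 0 ≤ t k := fun k => mul_nonneg (hc k) hx2
  have htsum : Summable t := hsum.mul_right _
  have hts : ∑' k, t k = s := tsum_mul_right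
  have htk : ∀ k, t k ≤ s := fun k => (Summable.le_tsum htsum k (fun j _ => ht0 j)).trans hts.le
  set f := fun k => besselJ0 (2 * Real.sqrt (c k) * x) with hf
  have hz : ∀ k, (2 * Real.sqrt (c k) * x)^2 = 4 * t k := by
    intro k
    rw [mul_pow, mul_pow, Real.sq_sqrt (hc k)]
    ring
  have hfl : ∀ k, 1 - t k ≤ f k := by
    intro k
    have h := le_besselJ0 (2 * Real.sqrt (c k) * x)
    rw [hz k] at h
    simpa [hf] using (by linarith : 1 - t k ≤ besselJ0 (2 * Real.sqrt (c k) * x))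
  have hfu : ∀ k, f k ≤ 1 - t k + (t k)^2/4 := by
    intro k
    have h := besselJ0_le (2 * Real.sqrt (c k) * x)
    have h4 : (2 * Real.sqrt (c k) * x)^4 = 16 * (t k)^2 := by
      rw [show (2 * Real.sqrt (c k) * x)^4 = ((2 * Real.sqrt (c k) * x)^2)^2 by ring, hz k]
      ring
    rw [hz k, h4] at h
    simpa [hf] using
      (by linarith : besselJ0 (2 * Real.sqrt (c k) * x) ≤ 1 - t k + (t k)^2/4)
  have hfpos : ∀ k, 0 < f k := fun k => lt_of_lt_of_le (by linarith [htk k]) (hfl k)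
  have hfexp : ∀ k, f k ≤ Real.exp (-t k) := by
    intro k
    have h1 : 1 - t k/2 ≤ Real.exp (-(t k/2)) := by
      have := Real.add_one_le_exp (-(t k/2)); linarith
    have h0 : (0:ℝ) ≤ 1 - t k/2 := by linarith [htk k]
    calc f k ≤ 1 - t k + (t k)^2/4 := hfu k
      _ = (1 - t k/2)^2 := by ring
      _ ≤ (Real.exp (-(t k/2)))^2 := pow_le_pow_left₀ h0 h1 2
      _ = Real.exp (-t k) := by rw [sq, ← Real.exp_add]; ring_nf
  have hf1 : ∀ k, f k ≤ 1 := by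
    intro k
    refine (hfexp k).trans ?_
    rw [show (1:ℝ) = Real.exp 0 by simp]
    exact Real.exp_le_exp.2 (by linarith [ht0 k])
  have habs : ∀ k, |Real.log (f k)| ≤ t k / (1 - s) := by
    intro k
    have hlogub : Real.log (f k) ≤ 0 := Real.log_nonpos (hfpos k).le (hf1 k)
    rw [abs_of_nonpos hlogub]
    have h1 : -Real.log (f k) = Real.log (f k)⁻¹ := (Real.log_inv _).symm
    have h2 : Real.log (f k)⁻¹ ≤ (f k)⁻¹ - 1 :=
      Real.log_le_sub_one_of_pos (inv_pos.2 (hfpos k))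
    have h3 : (f k)⁻¹ - 1 = (1 - f k) / f k := by
      rw [sub_div, div_self (hfpos k).ne', inv_eq_one_div]
    have h4 : (1 - f k) / f k ≤ t k / (1 - s) :=
      div_le_div₀ (ht0 k) (by linarith [hfl k]) (by linarith)
        (by linarith [hfl k, htk k])
    rw [h1]; rw [h3] at h2; linarith
  have hsl : Summable (fun k => Real.log (f k)) := by
    apply Summable.of_abs
    exact Summable.of_nonneg_of_le (fun k => abs_nonneg _) habs (htsum.div_const _)
  have hmult : Multipliable f :=
    Real.multipliable_of_summable_log hfpos hsl
  have hP : HasProd f (∏' k, f k) := hmult.hasProd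
  have hlow : 1 - s ≤ ∏' k, f k := by
    refine ge_of_tendsto' hP ?_
    intro F
    calc 1 - s ≤ 1 - ∑ k ∈ F, t k := by
          linarith [Summable.sum_le_tsum F (fun k _ => ht0 k) htsum, hts]
      _ ≤ ∏ k ∈ F, (1 - t k) := weier t ht0 (fun k => by linarith [htk k]) F
      _ ≤ ∏ k ∈ F, f k :=
          Finset.prod_le_prod (fun k _ => by linarith [htk k]) (fun k _ => hfl k)
  have hup : (∏' k, f k) ≤ Real.exp (-s) := by
    have h2 : HasSum (fun k => -t k) (-s) := (hts ▸ htsum.hasSum).neg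
    have h1 : Tendsto (fun F : Finset ι => Real.exp (∑ k ∈ F, -t k)) atTop
        (𝓝 (Real.exp (-s))) := (Real.continuous_exp.continuousAt.tendsto).comp h2
    refine le_of_tendsto_of_tendsto' hP h1 ?_
    intro F
    rw [Real.exp_sum]
    exact Finset.prod_le_prod (fun k _ => (hfpos k).le) (fun k _ => hfexp k)
  have hexps : Real.exp (-s) ≤ 1 - s + s^2/2 := by
    have h1 := Real.quadratic_le_exp_of_nonneg hs0
    have h2 : Real.exp (-s) * Real.exp s = 1 := by rw [← Real.exp_add]; simp
    nlinarith [Real.exp_pos (-s), Real.exp_pos s]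
  refine ⟨hmult, ?_⟩
  have h1s : 0 < 1 - s := by linarith
  have hbx : b ^ 2 * x ^ 4 = s ^ 2 := by rw [hsdef]; ring
  rw [hbx]
  have hnn : 0 ≤ (∏' k, f k) / (1 - s) - 1 := by
    have h := (one_le_div h1s).2 hlow
    linarith
  rw [abs_of_nonneg hnn, div_sub_one h1s.ne', div_le_div_iff₀ h1s (by positivity)]
  nlinarith [mul_le_mul_of_nonneg_right
      (show (∏' k, f k) - (1 - s) ≤ s^2/2 by linarith)
      (by positivity : (0:ℝ) ≤ 2*(1-s)^2),
    mul_nonneg (mul_nonneg (sq_nonneg s) hs0) h1s.le]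
end
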